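/- A language L ⊆ A* is a union of ∼ₙ-equivalence classes for some n if and only if L is a finite Boolean combination of languages of the form A*a₁A*a₂⋯A*aₖA* with aᵢ ∈ A (i.e., L is piecewise testable). -/

import Mathlib

def Subw {A : Type*} (n : ℕ) (u : List A) : Set (List A) :=
  {w | w.length ≤ n ∧ w.Sublist u}

def simn {A : Type*} (n : ℕ) (u v : List A) : Prop := Subw n u = Subw n v

/-- Finite Boolean combinations of the languages `A*a₁A*⋯A*aₖA*`
(the language of words containing `a₁⋯aₖ` as a scattered subword). -/
inductive PTcomb (A : Type*) : Set (List A) → Prop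
  | basic (w : List A) : PTcomb A {v | w.Sublist v}
  | compl {L : Set (List A)} : PTcomb A L → PTcomb A Lᶜ
  | union {L M : Set (List A)} : PTcomb A L → PTcomb A M → PTcomb A (L ∪ M)
  | inter {L M : Set (List A)} : PTcomb A L → PTcomb A M → PTcomb A (L ∩ M)

lemma PTcomb.univ {A : Type*} : PTcomb A Set.univ := by
  have h := PTcomb.basic (A := A) []
  simpa using h

lemma PTcomb.empty {A : Type*} : PTcomb A ∅ := by
  have h := PTcomb.univ.compl (A := A)
  simpa using h

lemma PTcomb.biUnion {A ι : Type*} {s : Set ι} (hs : s.Finite) {f : ι → Set (List A)}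
    (hf : ∀ i ∈ s, PTcomb A (f i)) : PTcomb A (⋃ i ∈ s, f i) := by
  revert hf
  refine Set.Finite.induction_on (motive := fun s _ =>
    (∀ i ∈ s, PTcomb A (f i)) → PTcomb A (⋃ i ∈ s, f i)) s hs ?_ ?_ <;> clear hs s
  · intro _; simpa using PTcomb.empty
  · intro a t ha hft ih hf
    rw [Set.biUnion_insert]
    exact (hf a (Set.mem_insert a t)).union
      (ih fun i hi => hf i (Set.mem_insert_of_mem _ hi))

lemma PTcomb.biInter {A ι : Type*} {s : Set ι} (hs : s.Finite) {f : ι → Set (List A)}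
    (hf : ∀ i ∈ s, PTcomb A (f i)) : PTcomb A (⋂ i ∈ s, f i) := by
  revert hf
  refine Set.Finite.induction_on (motive := fun s _ =>
    (∀ i ∈ s, PTcomb A (f i)) → PTcomb A (⋂ i ∈ s, f i)) s hs ?_ ?_ <;> clear hs s
  · intro _; simpa using PTcomb.univ
  · intro a t ha hft ih hf
    rw [Set.biInter_insert]
    exact (hf a (Set.mem_insert a t)).inter
      (ih fun i hi => hf i (Set.mem_insert_of_mem _ hi))

/-
  induction s, hs using Set.Finite.induction_on with
-/

lemma simn_mono {A : Type*} {m n : ℕ} (hmn : m ≤ n) {u v : List A} (h : simn n u v) :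
    simn m u v := by
  have key : ∀ w : List A, Subw m w = {x ∈ Subw n w | x.length ≤ m} := by
    intro w
    ext x
    simp only [Subw, Set.mem_setOf_eq, Set.mem_sep_iff]
    constructor
    · rintro ⟨h1, h2⟩; exact ⟨⟨h1.trans hmn, h2⟩, h1⟩
    · rintro ⟨⟨_, h2⟩, h3⟩; exact ⟨h3, h2⟩
  unfold simn
  rw [key u, key v, h]

/-- The `∼ₙ`-class of `u` is a PT combination. -/
lemma PTcomb_class {A : Type*} [Fintype A] (n : ℕ) (u : List A) :
    PTcomb A {v | simn n u v} := by
  have hW : ({w : List A | w.length ≤ n}).Finite := List.finite_length_le A n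
  have hS : (Subw n u).Finite := hW.subset (fun w hw => hw.1)
  have hD : ({w : List A | w.length ≤ n} \ Subw n u).Finite := hW.diff
  have hclass : {v | simn n u v} =
      (⋂ w ∈ Subw n u, {v : List A | w.Sublist v}) ∩
      (⋂ w ∈ ({w : List A | w.length ≤ n} \ Subw n u), {v : List A | w.Sublist v}ᶜ) := by
    ext v
    simp only [Set.mem_setOf_eq, Set.mem_inter_iff, Set.mem_iInter, Set.mem_diff,
      Set.mem_compl_iff, and_imp]
    constructor
    · intro h
      constructor
      · intro w hw
        have : w ∈ Subw n v := h ▸ hw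
        exact this.2
      · intro w hlen hnot hsub
        exact hnot (h.symm ▸ ⟨hlen, hsub⟩)
    · rintro ⟨h1, h2⟩
      ext w
      constructor
      · intro hw
        exact ⟨hw.1, h1 w hw⟩
      · intro hw
        by_contra hnot
        exact h2 w hw.1 hnot hw.2
  rw [hclass]
  exact (PTcomb.biInter hS fun w _ => PTcomb.basic w).inter
    (PTcomb.biInter hD fun w _ => (PTcomb.basic w).compl)

/-- `L` is a union of `∼ₙ`-classes for some `n` iff `L` is a finite
Boolean combination of languages of the form `A*a₁A*a₂⋯A*aₖA*` (piecewise testable). -/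
theorem union_of_simn_classes_iff_PT {A : Type*} [Fintype A] (L : Set (List A)) :
    (∃ n : ℕ, ∀ u v : List A, u ∈ L → simn n u v → v ∈ L) ↔ PTcomb A L := by
  constructor
  · rintro ⟨n, hn⟩
    -- L is the union of the classes of its elements; finitely many classes.
    set 𝒞 : Set (Set (List A)) := {C | ∃ u ∈ L, C = {v | simn n u v}} with h𝒞
    have hWfin : ({w : List A | w.length ≤ n}).Finite := List.finite_length_le A n
    have hfin : 𝒞.Finite := by
      have himg : 𝒞 ⊆ (fun S : Set (List A) => {v | S = Subw n v}) ''
          {S | S ⊆ {w : List A | w.length ≤ n}} := by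
        rintro C ⟨u, _, rfl⟩
        exact ⟨Subw n u, fun w hw => hw.1, rfl⟩
      exact (hWfin.finite_subsets.image _).subset himg
    have hLeq : L = ⋃ C ∈ 𝒞, C := by
      ext v
      simp only [Set.mem_iUnion, h𝒞, Set.mem_setOf_eq]
      constructor
      · intro hv
        exact ⟨{w | simn n v w}, ⟨v, hv, rfl⟩, rfl⟩
      · rintro ⟨C, ⟨u, hu, rfl⟩, hvC⟩
        exact hn u v hu hvC
    rw [hLeq]
    refine PTcomb.biUnion hfin ?_
    rintro C ⟨u, _, rfl⟩
    exact PTcomb_class n u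
  · intro h
    induction h with
    | basic w =>
      refine ⟨w.length, fun u v hu huv => ?_⟩
      have : w ∈ Subw w.length u := ⟨le_refl _, hu⟩
      have : w ∈ Subw w.length v := huv ▸ this
      exact this.2
    | @compl M hM ih =>
      obtain ⟨n, hn⟩ := ih
      exact ⟨n, fun u v hu huv hvM => hu (hn v u hvM huv.symm)⟩
    | @union M N hM hN ihM ihN =>
      obtain ⟨m, hm⟩ := ihM
      obtain ⟨k, hk⟩ := ihN
      refine ⟨max m k, fun u v hu huv => ?_⟩
      rcases hu with hu | hu
      · exact Or.inl (hm u v hu (simn_mono (le_max_left m k) huv))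
      · exact Or.inr (hk u v hu (simn_mono (le_max_right m k) huv))
    | @inter M N hM hN ihM ihN =>
      obtain ⟨m, hm⟩ := ihM
      obtain ⟨k, hk⟩ := ihN
      refine ⟨max m k, fun u v hu huv => ?_⟩
      exact ⟨hm u v hu.1 (simn_mono (le_max_left m k) huv),
        hk u v hu.2 (simn_mono (le_max_right m k) huv)⟩
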